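/- arXiv:1910.04031 — 2 statements merged into one kernel-verified Lean document; each statement's English description precedes it below -/
import Mathlib

section
/- Let p ≥ 1, n ≥ 2p, and let g be a directed graph on {1,…,n} with exactly p edges, no loops, such that the 2p endpoints of the edges are pairwise distinct (each nontrivial connected component is a single edge with two vertices). If σ_n is a random permutation of {1,…,n} with conjugation-invariant distribution, then P(σ_n ∈ S_{n,g}) ≤ 1/( C(n−p, p) · p! ), where C(·,·) is the binomial coefficient. -/
open ENNReal

theorem stmt11 {n p : ℕ} (hp : 1 ≤ p) (hn : 2 * p ≤ n)
    (a b : Fin p → Fin n)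
    (hinj : Function.Injective (Sum.elim a b : Fin p ⊕ Fin p → Fin n))
    (μ : PMF (Equiv.Perm (Fin n)))
    (hinv : ∀ τ : Equiv.Perm (Fin n), μ.map (fun σ => τ⁻¹ * σ * τ) = μ) :
    μ.toOuterMeasure {σ | ∀ i : Fin p, σ (a i) = b i}
      ≤ 1 / (((n - p).choose p : ℝ≥0∞) * (p.factorial : ℝ≥0∞)) := by
  classical
  have ha : Function.Injective a := fun i j h => by
    have := hinj (a₁ := Sum.inl i) (a₂ := Sum.inl j) (by simpa using h)
    simpa using this
  have hab : ∀ i j, a i ≠ b j := fun i j h => by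
    have := hinj (a₁ := Sum.inl i) (a₂ := Sum.inr j) (by simpa using h)
    simp at this
  -- the event for each injection from Fin p into the complement of range a
  set E : (Fin p ↪ ((Set.range a)ᶜ : Set (Fin n))) → Set (Equiv.Perm (Fin n)) :=
    fun g => {σ | ∀ i : Fin p, σ (a i) = (g i : Fin n)} with hE
  set q : ℝ≥0∞ := μ.toOuterMeasure {σ | ∀ i : Fin p, σ (a i) = b i} with hq
  -- every event E g has the same probability q
  have key : ∀ g, μ.toOuterMeasure (E g) = q := by
    intro g
    have hfinj : Function.Injective (fun i => (g i : Fin n)) := fun i j h =>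
      g.injective (Subtype.ext h)
    have hfa : ∀ i j, (g i : Fin n) ≠ a j := fun i j h => (g i).2 ⟨j, h.symm⟩
    -- build a permutation τ with τ (a i) = a i and τ (b i) = g i
    have hψinj : Function.Injective
        (Sum.elim a (fun i => (g i : Fin n)) : Fin p ⊕ Fin p → Fin n) := by
      rintro (i | i) (j | j) h <;> simp only [Sum.elim_inl, Sum.elim_inr] at h
      · exact congrArg Sum.inl (ha h)
      · exact absurd h.symm (hfa j i)
      · exact absurd h (hfa i j)
      · exact congrArg Sum.inr (hfinj h)
    set φ : Fin p ⊕ Fin p → Fin n := Sum.elim a b with hφ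
    set ψ : Fin p ⊕ Fin p → Fin n := Sum.elim a (fun i => (g i : Fin n)) with hψ
    set e : {x // x ∈ Set.range φ} ≃ {x // x ∈ Set.range ψ} :=
      (Equiv.ofInjective φ hinj).symm.trans (Equiv.ofInjective ψ hψinj) with he
    set τ : Equiv.Perm (Fin n) := e.extendSubtype with hτ
    have hτφ : ∀ x, τ (φ x) = ψ x := by
      intro x
      rw [hτ, Equiv.extendSubtype_apply_of_mem e (φ x) ⟨x, rfl⟩]
      have : (Equiv.ofInjective φ hinj).symm ⟨φ x, ⟨x, rfl⟩⟩ = x := by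
        rw [Equiv.symm_apply_eq]
        rfl
      simp only [he, Equiv.trans_apply, this]
      rfl
    have hτa : ∀ i, τ (a i) = a i := fun i => hτφ (Sum.inl i)
    have hτb : ∀ i, τ (b i) = (g i : Fin n) := fun i => hτφ (Sum.inr i)
    have hmap := hinv τ
    calc μ.toOuterMeasure (E g)
        = (μ.map (fun σ => τ⁻¹ * σ * τ)).toOuterMeasure
            {σ | ∀ i : Fin p, σ (a i) = b i} := by
          rw [PMF.toOuterMeasure_map_apply]
          congr 1
          ext σ
          simp only [Set.mem_preimage, Set.mem_setOf_eq, hE, Equiv.Perm.mul_apply]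
          constructor
          · intro h i
            have h2 : τ (b i) = σ (a i) := (hτb i).trans (h i).symm
            rw [hτa i, ← h2, Equiv.Perm.inv_def, Equiv.symm_apply_apply]
          · intro h i
            have h3 := h i
            rw [hτa i] at h3
            have h4 := congrArg τ h3
            rw [Equiv.Perm.inv_def, Equiv.apply_symm_apply] at h4
            rw [h4]
            exact hτb i
      _ = q := by rw [hmap]
  -- the events are pairwise disjoint, so the sum of their measures is ≤ 1
  have hsum : (Fintype.card (Fin p ↪ ((Set.range a)ᶜ : Set (Fin n))) : ℝ≥0∞) * q ≤ 1 := by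
    have hle : ∀ σ : Equiv.Perm (Fin n),
        ∑ g, (E g).indicator (⇑μ) σ ≤ μ σ := by
      intro σ
      by_cases hex : ∃ g, σ ∈ E g
      · obtain ⟨g0, hg0⟩ := hex
        rw [Finset.sum_eq_single g0]
        · rw [Set.indicator_of_mem hg0]
        · intro g _ hne
          rw [Set.indicator_of_notMem]
          intro hg
          apply hne
          apply DFunLike.ext
          intro i
          exact Subtype.ext ((hg i).symm.trans (hg0 i))
        · intro h; exact absurd (Finset.mem_univ g0) h
      · push_neg at hex
        rw [Finset.sum_eq_zero fun g _ => Set.indicator_of_notMem (hex g) _]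
        exact zero_le
    calc (Fintype.card (Fin p ↪ ((Set.range a)ᶜ : Set (Fin n))) : ℝ≥0∞) * q
        = ∑ g, μ.toOuterMeasure (E g) := by
          simp [key, Finset.card_univ, mul_comm]
      _ = ∑ g, ∑' σ, (E g).indicator (⇑μ) σ := by
          refine Finset.sum_congr rfl fun g _ => ?_
          rw [PMF.toOuterMeasure_apply]
      _ = ∑' σ, ∑ g, (E g).indicator (⇑μ) σ :=
          (Summable.tsum_finsetSum fun _ _ => ENNReal.summable).symm
      _ ≤ ∑' σ, μ σ := ENNReal.tsum_le_tsum hle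
      _ = 1 := μ.tsum_coe
  -- compute the cardinality
  have hcard : Fintype.card (Fin p ↪ ((Set.range a)ᶜ : Set (Fin n)))
      = (n - p).choose p * p.factorial := by
    have hC' : Fintype.card ((Set.range a)ᶜ : Set (Fin n)) = n - p := by
      rw [Fintype.card_compl_set, Set.card_range_of_injective ha]; simp
    rw [Fintype.card_embedding_eq, hC', Fintype.card_fin,
      Nat.descFactorial_eq_factorial_mul_choose, mul_comm]
  rw [hcard] at hsum
  have h1 : p ≤ n - p := by omega
  have hpos : ((n - p).choose p : ℝ≥0∞) * (p.factorial : ℝ≥0∞) ≠ 0 :=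
    mul_ne_zero (Nat.cast_ne_zero.mpr (Nat.choose_pos h1).ne')
      (Nat.cast_ne_zero.mpr p.factorial_ne_zero)
  have hfin : ((n - p).choose p : ℝ≥0∞) * (p.factorial : ℝ≥0∞) ≠ ⊤ :=
    ENNReal.mul_ne_top (ENNReal.natCast_ne_top _) (ENNReal.natCast_ne_top _)
  rw [ENNReal.le_div_iff_mul_le (Or.inl hpos) (Or.inl hfin)]
  calc q * (((n - p).choose p : ℝ≥0∞) * (p.factorial : ℝ≥0∞))
      = (((n - p).choose p * p.factorial : ℕ) : ℝ≥0∞) * q := by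
        push_cast; ring
    _ ≤ 1 := hsum
end

section
/- Let p ≥ 1, n ≥ 2p, and let g be a directed graph on {1,…,n} with exactly p edges whose 2p endpoints are pairwise distinct and with no loops. If σ_n is a random permutation of {1,…,n} with conjugation-invariant distribution, then P(σ_n ∈ S_{n,g}) ≥ (1 − (p²−p)/(n−1) − p·P(σ_n(1)=1)) / ( C(n−p, p)·p! ). -/
open ENNReal MeasureTheory

private lemma exists_perm_comp {n : ℕ} {ι : Type*} (u v : ι → Fin n)
    (hu : Function.Injective u) (hv : Function.Injective v) :
    ∃ τ : Equiv.Perm (Fin n), ∀ i, τ (u i) = v i := by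
  classical
  let e : {x // x ∈ Set.range u} ≃ {x // x ∈ Set.range v} :=
    (Equiv.ofInjective u hu).symm.trans (Equiv.ofInjective v hv)
  refine ⟨e.extendSubtype, fun i => ?_⟩
  rw [e.extendSubtype_apply_of_mem (u i) ⟨i, rfl⟩]
  show ((Equiv.ofInjective v hv) ((Equiv.ofInjective u hu).symm ⟨u i, ⟨i, rfl⟩⟩) : Fin n) = v i
  have h1 : (⟨u i, ⟨i, rfl⟩⟩ : {x // x ∈ Set.range u}) = Equiv.ofInjective u hu i := by
    ext; simp [Equiv.ofInjective]
  rw [h1, Equiv.symm_apply_apply]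
  simp [Equiv.ofInjective]

private lemma sum_elim_inj {n p : ℕ} {a c : Fin p → Fin n}
    (ha : Function.Injective a) (hc : Function.Injective c)
    (hd : ∀ i, c i ∉ Set.range a) :
    Function.Injective (Sum.elim a c : Fin p ⊕ Fin p → Fin n) := by
  intro x y h
  cases x with
  | inl i => cases y with
    | inl j => simp_all; exact ha h
    | inr j => exact absurd ⟨i, h⟩ (hd j)
  | inr i => cases y with
    | inl j => exact absurd ⟨j, h.symm⟩ (hd i)
    | inr j => simp_all; exact hc h

theorem stmt12 {n p : ℕ} (hp : 1 ≤ p) (hn : 2 * p ≤ n)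
    (a b : Fin p → Fin n)
    (hinj : Function.Injective (Sum.elim a b : Fin p ⊕ Fin p → Fin n))
    (μ : PMF (Equiv.Perm (Fin n)))
    (hinv : ∀ τ : Equiv.Perm (Fin n), μ.map (fun σ => τ⁻¹ * σ * τ) = μ) :
    μ.toOuterMeasure {σ | ∀ i : Fin p, σ (a i) = b i}
      ≥ (1 - ((p ^ 2 - p : ℕ) : ℝ≥0∞) / ((n - 1 : ℕ) : ℝ≥0∞)
          - (p : ℝ≥0∞) * μ.toOuterMeasure {σ | σ ⟨0, by omega⟩ = ⟨0, by omega⟩})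
        / (((n - p).choose p : ℝ≥0∞) * (p.factorial : ℝ≥0∞)) := by
  classical
  letI : MeasurableSpace (Equiv.Perm (Fin n)) := ⊤
  have hms : ∀ s : Set (Equiv.Perm (Fin n)), MeasurableSet s := fun s => trivial
  set M : Set (Equiv.Perm (Fin n)) → ℝ≥0∞ := fun s => μ.toMeasure s with hM
  have hMO : ∀ s : Set (Equiv.Perm (Fin n)), μ.toOuterMeasure s = M s := fun s =>
    (μ.toMeasure_apply_eq_toOuterMeasure_apply (hms s)).symm
  have ha : Function.Injective a := fun i j h => by
    have : (Sum.inl i : Fin p ⊕ Fin p) = Sum.inl j := hinj (by simpa using h)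
    simpa using this
  -- transport along conjugation
  have key : ∀ (τ : Equiv.Perm (Fin n)) (s : Set (Equiv.Perm (Fin n))),
      M ((fun σ => τ⁻¹ * σ * τ) ⁻¹' s) = M s := by
    intro τ s
    rw [← hMO, ← hMO]
    conv_rhs => rw [← hinv τ]
    rw [PMF.toOuterMeasure_map_apply]
  -- equal probability across jointly injective pairs of tuples
  have heq : ∀ {ι : Type} (c d c' d' : ι → Fin n),
      Function.Injective (Sum.elim c d : ι ⊕ ι → Fin n) →
      Function.Injective (Sum.elim c' d' : ι ⊕ ι → Fin n) →
      M {σ | ∀ i, σ (c' i) = d' i} = M {σ | ∀ i, σ (c i) = d i} := by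
    intro ι c d c' d' h1 h2
    obtain ⟨τ, hτ⟩ := exists_perm_comp (Sum.elim c d) (Sum.elim c' d') h1 h2
    have hpre : (fun σ => τ⁻¹ * σ * τ) ⁻¹' {σ | ∀ i, σ (c i) = d i}
        = {σ | ∀ i, σ (c' i) = d' i} := by
      ext σ
      simp only [Set.mem_preimage, Set.mem_setOf_eq]
      constructor
      · intro h i
        have := h i
        have hc := hτ (Sum.inl i)
        have hd := hτ (Sum.inr i)
        simp only [Sum.elim_inl, Sum.elim_inr] at hc hd
        rw [← hc, ← hd]
        simpa [Equiv.Perm.mul_apply] using congrArg τ this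
      · intro h i
        have hc := hτ (Sum.inl i)
        have hd := hτ (Sum.inr i)
        simp only [Sum.elim_inl, Sum.elim_inr] at hc hd
        simp only [Equiv.Perm.mul_apply]
        rw [hc, h i, ← hd]
        simp
    rw [← hpre, key]
  have hprob : IsProbabilityMeasure μ.toMeasure := PMF.toMeasure.isProbabilityMeasure μ
  set x0 : Fin n := ⟨0, by omega⟩ with hx0
  set r : ℝ≥0∞ := M {σ | σ x0 = x0} with hr
  set q : ℝ≥0∞ := M {σ | ∀ i, σ (a i) = b i} with hq
  -- fixed-point transport
  have hfix : ∀ x : Fin n, M {σ | σ x = x} = r := by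
    intro x
    obtain ⟨τ, hτ⟩ := exists_perm_comp (fun _ : Unit => x0) (fun _ : Unit => x)
      (fun _ _ _ => rfl) (fun _ _ _ => rfl)
    have hτ0 : τ x0 = x := hτ ()
    have hpre : (fun σ => τ⁻¹ * σ * τ) ⁻¹' {σ | σ x0 = x0} = {σ | σ x = x} := by
      ext σ
      simp only [Set.mem_preimage, Set.mem_setOf_eq, Equiv.Perm.mul_apply, ← hτ0]
      constructor
      · intro h; have := congrArg τ h; simpa using this
      · intro h; simp [h]
    rw [← hpre, key]
  -- off-diagonal transport
  have hsingle : ∀ x y x' y' : Fin n, x ≠ y → x' ≠ y' →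
      M {σ | σ x' = y'} = M {σ | σ x = y} := by
    intro x y x' y' hxy hxy'
    have h1 : Function.Injective
        (Sum.elim (fun _ : Unit => x) (fun _ : Unit => y) : Unit ⊕ Unit → Fin n) := by
      rintro (⟨⟩|⟨⟩) (⟨⟩|⟨⟩) h
      · rfl
      · exact absurd h hxy
      · exact absurd h.symm hxy
      · rfl
    have h2 : Function.Injective
        (Sum.elim (fun _ : Unit => x') (fun _ : Unit => y') : Unit ⊕ Unit → Fin n) := by
      rintro (⟨⟩|⟨⟩) (⟨⟩|⟨⟩) h
      · rfl
      · exact absurd h hxy'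
      · exact absurd h.symm hxy'
      · rfl
    have e1 : {σ : Equiv.Perm (Fin n) | ∀ _ : Unit, σ x = y} = {σ | σ x = y} := by
      ext σ; simp
    have e2 : {σ : Equiv.Perm (Fin n) | ∀ _ : Unit, σ x' = y'} = {σ | σ x' = y'} := by
      ext σ; simp
    rw [← e1, ← e2]
    exact heq (fun _ : Unit => x) (fun _ => y) (fun _ => x') (fun _ => y') h1 h2
  -- bound for x ≠ y
  have hone : (1:ℕ) ≤ n - 1 := by omega
  have hn1 : ((n-1:ℕ) : ℝ≥0∞) ≠ 0 := by
    simp only [ne_eq, Nat.cast_eq_zero]; omega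
  have hbound : ∀ x y : Fin n, x ≠ y → M {σ | σ x = y} ≤ 1 / ((n-1:ℕ) : ℝ≥0∞) := by
    intro x y hxy
    set S : Fin n → Set (Equiv.Perm (Fin n)) := fun z => {σ | σ x = z} with hS
    have hdisj : Pairwise (Function.onFun Disjoint S) := by
      intro z w hzw
      simp only [Function.onFun, Set.disjoint_left, hS, Set.mem_setOf_eq]
      intro σ h1 h2; exact hzw (h1 ▸ h2 ▸ rfl)
    have hunion : M (⋃ z, S z) = ∑' z, M (S z) :=
      measure_iUnion hdisj (fun z => hms _)
    have hle1 : ∑ z ∈ Finset.univ.erase x, M (S z) ≤ 1 := by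
      calc ∑ z ∈ Finset.univ.erase x, M (S z)
          ≤ ∑ z : Fin n, M (S z) := Finset.sum_le_sum_of_subset (Finset.subset_univ _)
        _ = ∑' z, M (S z) := (tsum_fintype _).symm
        _ = M (⋃ z, S z) := hunion.symm
        _ ≤ 1 := prob_le_one
    have hconst : ∀ z ∈ Finset.univ.erase x, M (S z) = M (S y) := by
      intro z hz
      exact hsingle x y x z hxy (fun h => (Finset.mem_erase.mp hz).1 h.symm)
    rw [Finset.sum_congr rfl hconst, Finset.sum_const, Finset.card_erase_of_mem
      (Finset.mem_univ x), Finset.card_univ, Fintype.card_fin, nsmul_eq_mul] at hle1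
    rw [ENNReal.le_div_iff_mul_le (Or.inl hn1) (Or.inl (natCast_ne_top _)), mul_comm]
    exact hle1
  -- partition event
  set C : Finset (Fin p → Fin n) :=
    Finset.univ.filter (fun c => Function.Injective c ∧ ∀ i, c i ∉ Set.range a) with hC
  set E0 : Set (Equiv.Perm (Fin n)) := {σ | ∀ i, σ (a i) ∉ Set.range a} with hE0
  have hpart : E0 = ⋃ c ∈ C, {σ : Equiv.Perm (Fin n) | ∀ i, σ (a i) = c i} := by
    ext σ
    simp only [Set.mem_iUnion, hE0, Set.mem_setOf_eq, hC, Finset.mem_filter,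
      Finset.mem_univ, true_and]
    constructor
    · intro h
      exact ⟨fun i => σ (a i), ⟨fun i j hij => ha (σ.injective hij), h⟩, fun i => rfl⟩
    · rintro ⟨c, ⟨hcinj, hcav⟩, hc⟩ i
      rw [hc i]; exact hcav i
  have hdisjC : (C : Set (Fin p → Fin n)).PairwiseDisjoint
      (fun c => {σ : Equiv.Perm (Fin n) | ∀ i, σ (a i) = c i}) := by
    intro c _ c' _ hne
    simp only [Function.onFun, Set.disjoint_left, Set.mem_setOf_eq]
    intro σ h1 h2
    exact hne (funext fun i => (h1 i).symm.trans (h2 i))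
  have hsame : ∀ c ∈ C, M {σ : Equiv.Perm (Fin n) | ∀ i, σ (a i) = c i} = q := by
    intro c hc
    simp only [hC, Finset.mem_filter] at hc
    exact heq a b a c hinj (sum_elim_inj ha hc.2.1 hc.2.2)
  have hE0q : M E0 = (C.card : ℝ≥0∞) * q := by
    rw [hpart]
    calc M (⋃ c ∈ C, {σ : Equiv.Perm (Fin n) | ∀ i, σ (a i) = c i})
        = ∑ c ∈ C, M {σ : Equiv.Perm (Fin n) | ∀ i, σ (a i) = c i} :=
          measure_biUnion_finset hdisjC (fun c _ => hms _)
      _ = ∑ _c ∈ C, q := Finset.sum_congr rfl hsame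
      _ = (C.card : ℝ≥0∞) * q := by rw [Finset.sum_const, nsmul_eq_mul]
  -- counting
  have hcard : C.card = (n - p).choose p * p.factorial := by
    have e : {c : Fin p → Fin n // Function.Injective c ∧ ∀ i, c i ∉ Set.range a}
        ≃ (Fin p ↪ ((Set.range a)ᶜ : Set (Fin n))) :=
      { toFun := fun c => ⟨fun i => ⟨c.1 i, c.2.2 i⟩,
          fun i j h => c.2.1 (congrArg Subtype.val h)⟩
        invFun := fun f => ⟨fun i => (f i : Fin n),
          fun i j h => f.injective (Subtype.ext h), fun i => (f i).2⟩
        left_inv := fun c => rfl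
        right_inv := fun f => by ext i; rfl }
    have h1 : C.card = Fintype.card
        {c : Fin p → Fin n // Function.Injective c ∧ ∀ i, c i ∉ Set.range a} := by
      rw [Fintype.card_subtype]
    have h2 : Fintype.card ((Set.range a)ᶜ : Set (Fin n)) = n - p := by
      rw [Fintype.card_compl_set, Set.card_range_of_injective ha]
      simp
    rw [h1, Fintype.card_congr e, Fintype.card_embedding_eq, h2, Fintype.card_fin,
      Nat.descFactorial_eq_factorial_mul_choose, mul_comm]
  -- complement bound
  have hcompl : M E0ᶜ ≤ ((p^2 - p : ℕ) : ℝ≥0∞) / ((n-1:ℕ) : ℝ≥0∞) + (p : ℝ≥0∞) * r := by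
    have hsub : E0ᶜ ⊆ ⋃ ij : Fin p × Fin p,
        {σ : Equiv.Perm (Fin n) | σ (a ij.1) = a ij.2} := by
      intro σ hσ
      simp only [hE0, Set.mem_compl_iff, Set.mem_setOf_eq, not_forall, not_not] at hσ
      obtain ⟨i, j, hj⟩ := hσ
      exact Set.mem_iUnion.mpr ⟨(i, j), hj.symm⟩
    have hterm : ∀ ij : Fin p × Fin p,
        M {σ : Equiv.Perm (Fin n) | σ (a ij.1) = a ij.2}
          ≤ if ij.1 = ij.2 then r else 1 / ((n-1:ℕ) : ℝ≥0∞) := by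
      rintro ⟨i, j⟩
      by_cases h : i = j
      · subst h; simp only [if_pos rfl]; exact le_of_eq (hfix (a i))
      · simp only [if_neg h]; exact hbound _ _ (fun hh => h (ha hh))
    calc M E0ᶜ ≤ M (⋃ ij : Fin p × Fin p,
          {σ : Equiv.Perm (Fin n) | σ (a ij.1) = a ij.2}) := measure_mono hsub
      _ ≤ ∑' ij : Fin p × Fin p,
          M {σ : Equiv.Perm (Fin n) | σ (a ij.1) = a ij.2} := measure_iUnion_le _
      _ = ∑ ij : Fin p × Fin p,
          M {σ : Equiv.Perm (Fin n) | σ (a ij.1) = a ij.2} := tsum_fintype _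
      _ ≤ ∑ ij : Fin p × Fin p,
          (if ij.1 = ij.2 then r else 1 / ((n-1:ℕ) : ℝ≥0∞)) :=
        Finset.sum_le_sum (fun ij _ => hterm ij)
      _ = ((p^2 - p : ℕ) : ℝ≥0∞) / ((n-1:ℕ) : ℝ≥0∞) + (p : ℝ≥0∞) * r := by
        rw [Finset.sum_ite]
        have hd : Finset.univ.filter (fun ij : Fin p × Fin p => ij.1 = ij.2)
            = (Finset.univ : Finset (Fin p)).diag := by
          ext ⟨i, j⟩; simp [Finset.mem_diag]
        have ho : Finset.univ.filter (fun ij : Fin p × Fin p => ¬ ij.1 = ij.2)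
            = (Finset.univ : Finset (Fin p)).offDiag := by
          ext ⟨i, j⟩; simp [Finset.mem_offDiag]
        rw [hd, ho, Finset.sum_const, Finset.sum_const, Finset.diag_card,
          Finset.offDiag_card, Finset.card_univ, Fintype.card_fin,
          nsmul_eq_mul, nsmul_eq_mul]
        have hpp : p * p - p = p ^ 2 - p := by rw [pow_two]
        rw [hpp, mul_one_div, add_comm]
  -- assemble
  have h1e : M E0 = 1 - M E0ᶜ := by
    have := prob_compl_eq_one_sub (μ := μ.toMeasure) (hms E0ᶜ)
    rw [compl_compl] at this
    exact this
  have hDcard : ((n-p).choose p : ℝ≥0∞) * (p.factorial : ℝ≥0∞) = (C.card : ℝ≥0∞) := by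
    rw [hcard]; push_cast; ring
  rw [ge_iff_le]
  simp only [hMO]
  rw [hfix ⟨0, by omega⟩, hDcard]
  refine ENNReal.div_le_of_le_mul ?_
  calc 1 - ((p^2 - p : ℕ) : ℝ≥0∞) / ((n-1:ℕ) : ℝ≥0∞) - (p : ℝ≥0∞) * r
      = 1 - (((p^2 - p : ℕ) : ℝ≥0∞) / ((n-1:ℕ) : ℝ≥0∞) + (p : ℝ≥0∞) * r) := by
        rw [tsub_tsub]
    _ ≤ 1 - M E0ᶜ := tsub_le_tsub_left hcompl 1
    _ = M E0 := h1e.symm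
    _ = (C.card : ℝ≥0∞) * q := hE0q
    _ = q * (C.card : ℝ≥0∞) := mul_comm _ _
end
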